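/- arXiv:2412.07789 — 5 statements merged into one kernel-verified Lean document; each statement's English description precedes it below -/
import Mathlib

section
/- If P' = P ∪ {x} with x ∉ P, then for p ∈ P the core distance of p changes (cd_{P'}(p) < cd_P(p) or equivalently strictly decreases) only if dist(p,x) < cd_P(p); consequently, every point whose core distance strictly decreases upon inserting x has x among its minPts nearest neighbors in P', i.e., is a reverse minPts-nearest neighbor of x. -/
open scoped Classical

lemma countP_lt_le (L : List ℝ) (hL : L.Pairwise (· ≤ ·)) (k : ℕ) (hk : k < L.length) :
    L.countP (fun b => decide (b < L[k])) ≤ k := by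
  have h2 : (L.drop k).countP (fun b => decide (b < L[k])) = 0 := by
    rw [List.countP_eq_zero]
    intro b hb
    rw [List.mem_iff_getElem] at hb
    obtain ⟨i, hi, rfl⟩ := hb
    rw [List.getElem_drop]
    simp only [decide_eq_true_eq, not_lt]
    rcases Nat.eq_zero_or_pos i with h | h
    · simp [h]
    · have hi2 : k + i < L.length := by
        have := hi; simp [List.length_drop] at this; omega
      exact List.pairwise_iff_getElem.mp hL k (k + i) hk hi2 (by omega)
  calc L.countP (fun b => decide (b < L[k]))
      = (L.take k ++ L.drop k).countP (fun b => decide (b < L[k])) := by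
        rw [List.take_append_drop]
    _ = (L.take k).countP (fun b => decide (b < L[k]))
        + (L.drop k).countP (fun b => decide (b < L[k])) := List.countP_append
    _ ≤ k + 0 := by
        rw [h2]
        exact Nat.add_le_add (le_trans List.countP_le_length (by simp)) le_rfl
    _ = k := by omega

lemma le_countP_le (L : List ℝ) (hL : L.Pairwise (· ≤ ·)) (k : ℕ) (hk : k < L.length) :
    k + 1 ≤ L.countP (fun b => decide (b ≤ L[k])) := by
  have h1 : (L.take (k + 1)).countP (fun b => decide (b ≤ L[k])) = k + 1 := by
    rw [List.countP_eq_length_filter, List.filter_eq_self.mpr, List.length_take]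
    · omega
    · intro b hb
      rw [List.mem_iff_getElem] at hb
      obtain ⟨i, hi, rfl⟩ := hb
      rw [List.getElem_take]
      simp only [decide_eq_true_eq]
      have hi' : i < k + 1 := by
        have := hi; simp [List.length_take] at this; omega
      rcases Nat.lt_or_ge i k with h | h
      · exact List.pairwise_iff_getElem.mp hL i k (by omega) hk h
      · have : i = k := by omega
        simp [this]
  calc k + 1 = (L.take (k + 1)).countP (fun b => decide (b ≤ L[k])) := h1.symm
    _ ≤ L.countP (fun b => decide (b ≤ L[k])) := (List.take_sublist _ _).countP_le

lemma key_insert (a : ℝ) (m : Multiset ℝ) (k : ℕ) (hk : k < Multiset.card m)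
    (h : ((a ::ₘ m).sort (· ≤ ·)).getD k 0 < (m.sort (· ≤ ·)).getD k 0) :
    a ≤ ((a ::ₘ m).sort (· ≤ ·)).getD k 0 := by
  set L := m.sort (· ≤ ·) with hLdef
  set L' := (a ::ₘ m).sort (· ≤ ·) with hL'def
  have hlen : L.length = Multiset.card m := Multiset.length_sort _
  have hlen' : L'.length = Multiset.card m + 1 := by
    rw [hL'def, Multiset.length_sort, Multiset.card_cons]
  have hkL : k < L.length := by omega
  have hkL' : k < L'.length := by omega
  rw [List.getD_eq_getElem _ _ hkL'] at h ⊢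
  rw [List.getD_eq_getElem _ _ hkL] at h
  by_contra hcon
  push_neg at hcon
  -- transfer countP to multiset
  have hB : k + 1 ≤ L'.countP (fun b => decide (b ≤ L'[k])) :=
    le_countP_le L' (Multiset.pairwise_sort _ _) k hkL'
  have hm' : (L' : Multiset ℝ) = a ::ₘ m := Multiset.sort_eq _ _
  have hm : (L : Multiset ℝ) = m := Multiset.sort_eq _ _
  have htrans : L'.countP (fun b => decide (b ≤ L'[k]))
      = L.countP (fun b => decide (b ≤ L'[k])) := by
    have : Multiset.countP (fun b => decide (b ≤ L'[k])) (L' : Multiset ℝ)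
        = Multiset.countP (fun b => decide (b ≤ L'[k])) (a ::ₘ (L : Multiset ℝ)) := by
      rw [hm', hm]
    rw [Multiset.countP_cons] at this
    simp only [Multiset.coe_countP] at this
    simpa [not_le.mpr hcon] using this
  have hA : L.countP (fun b => decide (b < L[k])) ≤ k :=
    countP_lt_le L (Multiset.pairwise_sort _ _) k hkL
  have hmono : L.countP (fun b => decide (b ≤ L'[k]))
      ≤ L.countP (fun b => decide (b < L[k])) := by
    apply List.countP_mono_left
    intro b _ hb
    simp only [decide_eq_true_eq] at hb ⊢
    exact lt_of_le_of_lt hb h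
  omega


/-- The core distance of `p` w.r.t. a finite point set `P`: the `minPts`-th smallest
distance from `p` to the points of `P \\ {p}` (1-indexed, via the sorted list of
distances). -/
noncomputable def coreDist {d : ℕ} (minPts : ℕ) (P : Finset (EuclideanSpace ℝ (Fin d)))
    (p : EuclideanSpace ℝ (Fin d)) : ℝ :=
  (((P.erase p).val.map (fun q => dist p q)).sort (· ≤ ·)).getD (minPts - 1) 0

/-- If inserting `x` strictly decreases the core distance of `p`, then
`dist p x < coreDist minPts P p`; consequently `p` is a reverse `minPts`-nearest
neighbor of `x` in `insert x P`, i.e. `dist p x ≤ coreDist minPts (insert x P) p`. -/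
theorem coreDist_decrease_rknn {d : ℕ} (minPts : ℕ) (hminPts : 1 ≤ minPts)
    (P : Finset (EuclideanSpace ℝ (Fin d))) (x p : EuclideanSpace ℝ (Fin d))
    (hx : x ∉ P) (hp : p ∈ P) (hcard : minPts < P.card)
    (hdec : coreDist minPts (insert x P) p < coreDist minPts P p) :
    dist p x < coreDist minPts P p ∧ dist p x ≤ coreDist minPts (insert x P) p := by
  have hxp : x ≠ p := fun h => hx (h ▸ hp)
  have herase : (insert x P).erase p = insert x (P.erase p) :=
    Finset.erase_insert_of_ne hxp
  have hxnm : x ∉ P.erase p := fun h => hx (Finset.mem_of_mem_erase h)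
  have hmul : ((insert x P).erase p).val.map (fun q => dist p q)
      = dist p x ::ₘ (P.erase p).val.map (fun q => dist p q) := by
    rw [herase, Finset.insert_val_of_notMem hxnm, Multiset.map_cons]
  have hk : minPts - 1 < Multiset.card ((P.erase p).val.map (fun q => dist p q)) := by
    rw [Multiset.card_map]
    have : (P.erase p).card = P.card - 1 := Finset.card_erase_of_mem hp
    have h2 : ((P.erase p).val).card = (P.erase p).card := rfl
    rw [h2, this]
    omega
  have hdec' := hdec
  unfold coreDist at hdec' ⊢
  rw [hmul] at hdec' ⊢
  have hle := key_insert (dist p x) _ _ hk hdec'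
  exact ⟨lt_of_le_of_lt hle hdec', hle⟩
end

section
/- Deleting a point x from P changes the core distance of p ∈ P \ {x} only if p is a reverse minPts-nearest neighbor of x: if dist(p,x) > cd_P(p) then cd_{P\{x}}(p) = cd_P(p). -/
open scoped Classical

lemma sort_cons_eq_orderedInsert (a : ℝ) (s : Multiset ℝ) :
    (a ::ₘ s).sort (· ≤ ·) = (s.sort (· ≤ ·)).orderedInsert (· ≤ ·) a := by
  have hsorted' : ((s.sort (· ≤ ·)).orderedInsert (· ≤ ·) a).Pairwise (· ≤ ·) :=
    List.Pairwise.orderedInsert a _ (Multiset.pairwise_sort s _)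
  refine List.Perm.eq_of_pairwise' (Multiset.pairwise_sort _ _) hsorted' ?_
  have h1 : List.Perm ((a ::ₘ s).sort (· ≤ ·)) (a :: s.sort (· ≤ ·)) := by
    rw [← Multiset.coe_eq_coe, Multiset.sort_eq, ← Multiset.cons_coe, Multiset.sort_eq]
  exact h1.trans (List.perm_orderedInsert _ a _).symm

lemma getD_orderedInsert (a : ℝ) :
    ∀ (l : List ℝ) (k : ℕ), l.Pairwise (· ≤ ·) →
      (l.orderedInsert (· ≤ ·) a).getD k 0 < a →
      (l.orderedInsert (· ≤ ·) a).getD k 0 = l.getD k 0 := by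
  intro l
  induction l with
  | nil =>
    intro k _ hlt
    cases k with
    | zero => simp [List.orderedInsert] at hlt
    | succ n => simp [List.orderedInsert]
  | cons b t ih =>
    intro k hs hlt
    by_cases hab : a ≤ b
    · rw [List.orderedInsert_cons_of_le _ _ hab] at hlt ⊢
      cases k with
      | zero => simp at hlt
      | succ n =>
        simp only [List.getD_cons_succ] at hlt ⊢
        -- (b :: t).getD n 0 < a ≤ b ≤ all elements: contradiction unless out of range
        by_cases hn : n < (b :: t).length
        · exfalso
          have hmem : (b :: t).get ⟨n, hn⟩ ∈ b :: t := List.get_mem _ ⟨n, hn⟩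
          have hge : b ≤ (b :: t).get ⟨n, hn⟩ := by
            rcases List.mem_cons.mp hmem with h | h
            · rw [h]
            · exact (List.pairwise_cons.mp hs).1 _ h
          rw [List.getD_eq_get _ _ ⟨n, hn⟩] at hlt
          linarith
        · push_neg at hn
          rw [List.getD_eq_default _ _ hn, List.getD_eq_default]
          simp at hn ⊢
          omega
    · have : (b :: t).orderedInsert (· ≤ ·) a = b :: t.orderedInsert (· ≤ ·) a := by
        simp [List.orderedInsert, hab]
      rw [this] at hlt ⊢
      cases k with
      | zero => simp
      | succ n =>
        simp only [List.getD_cons_succ] at hlt ⊢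
        exact ih n (List.pairwise_cons.mp hs).2 hlt

/-- Deleting `x` changes the core distance of `p` only if `p` is a reverse
`minPts`-nearest neighbor of `x`: if `dist p x` exceeds `coreDist minPts P p`, the core
distance of `p` is unchanged by the deletion of `x`. -/
theorem coreDist_erase_eq_of_far {d : ℕ} (minPts : ℕ) (hminPts : 1 ≤ minPts)
    (P : Finset (EuclideanSpace ℝ (Fin d))) (x p : EuclideanSpace ℝ (Fin d))
    (hx : x ∈ P) (hp : p ∈ P.erase x) (hcard : minPts + 1 < P.card)
    (hfar : coreDist minPts P p < dist p x) :
    coreDist minPts (P.erase x) p = coreDist minPts P p := by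
  have hpx : p ≠ x := (Finset.mem_erase.mp hp).1
  have hxp : x ∈ P.erase p := Finset.mem_erase.mpr ⟨Ne.symm hpx, hx⟩
  have hkey : (P.erase p).val = x ::ₘ ((P.erase p).erase x).val :=
    (Multiset.cons_erase hxp).symm
  have hcomm : (P.erase x).erase p = (P.erase p).erase x := Finset.erase_right_comm
  unfold coreDist
  rw [hcomm, hkey, Multiset.map_cons, sort_cons_eq_orderedInsert]
  refine (getD_orderedInsert _ _ _ (Multiset.pairwise_sort _ _) ?_).symm
  have := hfar
  unfold coreDist at this
  rw [hkey, Multiset.map_cons, sort_cons_eq_orderedInsert] at this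
  exact this
end

section
/- Reduction rule for MST under edge-weight decreases and vertex insertion: let G = (V, E, w) be a connected weighted graph with minimum spanning tree T, and let G' = (V, E, w') be the same graph where w'(e) ≤ w(e) for all e, with equality except on a subset D ⊆ E. Then G' has a minimum spanning tree T' with T' ⊆ T ∪ D. -/
open scoped Classical

/-- `T` is a spanning tree of the graph on vertex set `V` with edge set `E`:
`T ⊆ E` and the graph with edge set `T` is a tree on `V` (connected and acyclic). -/
def IsSpanningTree {V : Type*} [Fintype V] (E T : Finset (Sym2 V)) : Prop :=
  T ⊆ E ∧ (SimpleGraph.fromEdgeSet (↑T : Set (Sym2 V))).IsTree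

/-- `T` is a minimum spanning tree of the weighted graph `(V, E, w)`. -/
noncomputable def IsMST {V : Type*} [Fintype V] (w : Sym2 V → ℝ)
    (E T : Finset (Sym2 V)) : Prop :=
  IsSpanningTree E T ∧ ∀ T', IsSpanningTree E T' → ∑ e ∈ T, w e ≤ ∑ e ∈ T', w e

set_option linter.unusedSectionVars false

namespace MSTAux

open SimpleGraph Finset

variable {V : Type*} [Fintype V]

lemma gg_adj {S : Finset (Sym2 V)} {a b : V} :
    (fromEdgeSet (↑S : Set (Sym2 V))).Adj a b ↔ s(a, b) ∈ S ∧ a ≠ b := by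
  rw [fromEdgeSet_adj]; simp

lemma gg_mono {S S' : Finset (Sym2 V)} (h : S ⊆ S') :
    fromEdgeSet (↑S : Set (Sym2 V)) ≤ fromEdgeSet (↑S' : Set (Sym2 V)) :=
  fromEdgeSet_mono (by exact_mod_cast h)

lemma acyclic_anti {G H : SimpleGraph V} (hle : G ≤ H) (hH : H.IsAcyclic) : G.IsAcyclic := by
  intro w c hc
  have hsub : ∀ e ∈ c.edges, e ∈ H.edgeSet :=
    fun e' he' => (edgeSet_mono hle) (c.edges_subset_edgeSet he')
  exact hH (c.transfer H hsub) (hc.transfer hsub)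

lemma erase_diag {S : Finset (Sym2 V)} {e : Sym2 V} (he : e.IsDiag) :
    fromEdgeSet (↑(S.erase e) : Set (Sym2 V)) = fromEdgeSet (↑S : Set (Sym2 V)) := by
  ext a b
  simp only [gg_adj, Finset.mem_erase]
  refine ⟨fun ⟨⟨_, h2⟩, h3⟩ => ⟨h2, h3⟩, fun ⟨h1, h2⟩ => ⟨⟨?_, h1⟩, h2⟩⟩
  rintro rfl
  exact h2 (Sym2.mk_isDiag_iff.mp he)

lemma insert_diag {S : Finset (Sym2 V)} {e : Sym2 V} (he : e.IsDiag) :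
    fromEdgeSet (↑(insert e S) : Set (Sym2 V)) = fromEdgeSet (↑S : Set (Sym2 V)) := by
  ext a b
  simp only [gg_adj, Finset.mem_insert]
  refine ⟨fun ⟨h1, h2⟩ => ⟨?_, h2⟩, fun ⟨h1, h2⟩ => ⟨Or.inr h1, h2⟩⟩
  rcases h1 with h1 | h1
  · exact absurd (h1 ▸ he) (by simpa [Sym2.mk_isDiag_iff] using h2)
  · exact h1

lemma erase_eq_del {S : Finset (Sym2 V)} {f : Sym2 V} :
    fromEdgeSet (↑(S.erase f) : Set (Sym2 V)) =
      fromEdgeSet (↑S : Set (Sym2 V)) \ fromEdgeSet {f} := by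
  ext a b
  simp only [gg_adj, Finset.mem_erase, sdiff_adj, fromEdgeSet_adj, Set.mem_singleton_iff, Finset.mem_coe]
  tauto

lemma insert_del {S : Finset (Sym2 V)} {f : Sym2 V} (hf : f ∉ S) :
    fromEdgeSet (↑(insert f S) : Set (Sym2 V)) \ fromEdgeSet {f} =
      fromEdgeSet (↑S : Set (Sym2 V)) := by
  ext a b
  simp only [gg_adj, Finset.mem_insert, sdiff_adj, fromEdgeSet_adj, Set.mem_singleton_iff, Finset.mem_coe]
  constructor
  · rintro ⟨⟨h1 | h1, h2⟩, h3⟩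
    · exact absurd ⟨h1, h2⟩ h3
    · exact ⟨h1, h2⟩
  · rintro ⟨h1, h2⟩
    exact ⟨⟨Or.inr h1, h2⟩, fun hh => hf (hh.1 ▸ h1)⟩

lemma not_reach_erase {S : Finset (Sym2 V)} {u v : V}
    (hac : (fromEdgeSet (↑S : Set (Sym2 V))).IsAcyclic) (h : s(u, v) ∈ S) (hne : u ≠ v) :
    ¬ (fromEdgeSet (↑(S.erase s(u, v)) : Set (Sym2 V))).Reachable u v := by
  have hadj : (fromEdgeSet (↑S : Set (Sym2 V))).Adj u v := gg_adj.2 ⟨h, hne⟩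
  have hb := isAcyclic_iff_forall_adj_isBridge.mp hac hadj
  rw [isBridge_iff] at hb
  rw [erase_eq_del]
  exact hb

lemma twocomp_aux {S : Finset (Sym2 V)} {u v : V} {x t : V}
    (p : (fromEdgeSet (↑S : Set (Sym2 V))).Walk x t) (ht : t = u ∨ t = v) :
    (fromEdgeSet (↑(S.erase s(u, v)) : Set (Sym2 V))).Reachable x u ∨
      (fromEdgeSet (↑(S.erase s(u, v)) : Set (Sym2 V))).Reachable x v := by
  induction p with
  | nil =>
    rcases ht with rfl | rfl
    · exact Or.inl (Reachable.refl _)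
    · exact Or.inr (Reachable.refl _)
  | @cons a b c hadj q ih =>
    by_cases hfe : s(a, b) = s(u, v)
    · rcases Sym2.eq_iff.mp hfe with ⟨rfl, rfl⟩ | ⟨rfl, rfl⟩
      · exact Or.inl (Reachable.refl _)
      · exact Or.inr (Reachable.refl _)
    · have hadj' : (fromEdgeSet (↑(S.erase s(u, v)) : Set (Sym2 V))).Adj a b :=
        gg_adj.2 ⟨Finset.mem_erase.2 ⟨hfe, (gg_adj.1 hadj).1⟩, hadj.ne⟩
      exact (ih ht).imp hadj'.reachable.trans hadj'.reachable.trans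

lemma twocomp {S : Finset (Sym2 V)} {u v x : V}
    (p : (fromEdgeSet (↑S : Set (Sym2 V))).Walk x u) :
    (fromEdgeSet (↑(S.erase s(u, v)) : Set (Sym2 V))).Reachable x u ∨
      (fromEdgeSet (↑(S.erase s(u, v)) : Set (Sym2 V))).Reachable x v :=
  twocomp_aux p (Or.inl rfl)

lemma avoid {S : Finset (Sym2 V)} {f : Sym2 V} {x y : V}
    (p : (fromEdgeSet (↑S : Set (Sym2 V))).Walk x y) (hf : f ∉ p.edges) :
    (fromEdgeSet (↑(S.erase f) : Set (Sym2 V))).Reachable x y := by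
  induction p with
  | nil => exact Reachable.refl _
  | @cons a b c hadj q ih =>
    simp only [Walk.edges_cons, List.mem_cons, not_or] at hf
    have hadj' : (fromEdgeSet (↑(S.erase f) : Set (Sym2 V))).Adj a b :=
      gg_adj.2 ⟨Finset.mem_erase.2 ⟨fun hh => hf.1 hh.symm, (gg_adj.1 hadj).1⟩, hadj.ne⟩
    exact hadj'.reachable.trans (ih hf.2)

lemma cross {S : Finset (Sym2 V)} (A : V → Prop) {x y : V}
    (p : (fromEdgeSet (↑S : Set (Sym2 V))).Walk x y)
    (hp : p.IsPath) (hx : A x) (hy : ¬ A y) :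
    ∃ a b, A a ∧ ¬ A b ∧ s(a, b) ∈ p.edges ∧
      (fromEdgeSet (↑(S.erase s(a, b)) : Set (Sym2 V))).Reachable x a ∧
      (fromEdgeSet (↑(S.erase s(a, b)) : Set (Sym2 V))).Reachable b y := by
  induction p with
  | nil => exact absurd hx hy
  | @cons x c y hadj q ih =>
    have hq : q.IsPath := hp.of_cons
    have hxs : x ∉ q.support := ((Walk.cons_isPath_iff hadj q).mp hp).2
    by_cases hc : A c
    · obtain ⟨a, b, hAa, hAb, hmem, hra, hrb⟩ := ih hq hc hy
      refine ⟨a, b, hAa, hAb, by simp [Walk.edges_cons, hmem], ?_, hrb⟩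
      have hne : s(x, c) ≠ s(a, b) :=
        fun hh => hxs (q.fst_mem_support_of_mem_edges (hh ▸ hmem))
      have hadj' : (fromEdgeSet (↑(S.erase s(a, b)) : Set (Sym2 V))).Adj x c :=
        gg_adj.2 ⟨Finset.mem_erase.2 ⟨hne, (gg_adj.1 hadj).1⟩, hadj.ne⟩
      exact hadj'.reachable.trans hra
    · exact ⟨x, c, hx, hc, by simp [Walk.edges_cons], Reachable.refl x,
        avoid q (fun hh => hxs (q.fst_mem_support_of_mem_edges hh))⟩

lemma add_acyclic {S : Finset (Sym2 V)} {u v : V}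
    (hac : (fromEdgeSet (↑S : Set (Sym2 V))).IsAcyclic)
    (h : ¬ (fromEdgeSet (↑S : Set (Sym2 V))).Reachable u v) :
    (fromEdgeSet (↑(insert s(u, v) S) : Set (Sym2 V))).IsAcyclic := by
  have hne : u ≠ v := by rintro rfl; exact h (Reachable.refl u)
  have hfS : s(u, v) ∉ S := fun hm => h (gg_adj.2 ⟨hm, hne⟩).reachable
  intro w c hc
  by_cases hmem : s(u, v) ∈ c.edges
  · have hb : (fromEdgeSet (↑(insert s(u, v) S) : Set (Sym2 V))).IsBridge s(u, v) := by
      rw [isBridge_iff]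
      rw [deleteEdges, insert_del hfS]; exact h
    exact hb.notMem_edges_of_isCycle hc hmem
  · have hsub : ∀ e' ∈ c.edges, e' ∈ (fromEdgeSet (↑S : Set (Sym2 V))).edgeSet := by
      intro e' he'
      have h1 := c.edges_subset_edgeSet he'
      rw [edgeSet_fromEdgeSet] at h1 ⊢
      have hne' : e' ≠ s(u, v) := fun hh => hmem (hh ▸ he')
      refine ⟨?_, h1.2⟩
      rcases Finset.mem_insert.mp (by exact_mod_cast h1.1) with hh | hh
      · exact absurd hh hne'
      · exact_mod_cast hh
    exact hac (c.transfer _ hsub) (hc.transfer hsub)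

end MSTAux

open SimpleGraph in
/-- Reduction rule for MST under edge-weight decreases: if `T` is an MST of `(V, E, w)`
and `w'` satisfies `w' ≤ w` on `E` with equality outside a subset `D ⊆ E`, then
`(V, E, w')` has a minimum spanning tree contained in `T ∪ D`. -/
theorem mst_reduction_rule {V : Type*} [Fintype V]
    (w w' : Sym2 V → ℝ) (E T D : Finset (Sym2 V)) (hD : D ⊆ E)
    (hT : IsMST w E T)
    (hle : ∀ e ∈ E, w' e ≤ w e)
    (heq : ∀ e ∈ E, e ∉ D → w' e = w e) :
    ∃ T', IsMST w' E T' ∧ T' ⊆ T ∪ D := by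
  classical
  obtain ⟨⟨hTE, hTtree⟩, hTmin⟩ := hT
  obtain ⟨hTconn, hTac⟩ := (SimpleGraph.isTree_iff _).mp hTtree
  set SS : Finset (Finset (Sym2 V)) := E.powerset.filter (fun X => IsSpanningTree E X)
    with hSSdef
  have hTSS : T ∈ SS := Finset.mem_filter.2 ⟨Finset.mem_powerset.2 hTE, ⟨hTE, hTtree⟩⟩
  obtain ⟨T₀, hT₀, hT₀min⟩ := SS.exists_min_image (fun X => ∑ e ∈ X, w' e) ⟨T, hTSS⟩
  set m : ℝ := ∑ e ∈ T₀, w' e with hm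
  have hmin_sum : ∀ X, IsSpanningTree E X → m ≤ ∑ e ∈ X, w' e := fun X hX =>
    hT₀min X (Finset.mem_filter.2 ⟨Finset.mem_powerset.2 hX.1, hX⟩)
  set SS2 : Finset (Finset (Sym2 V)) := SS.filter (fun X => ∑ e ∈ X, w' e = m) with hSS2def
  obtain ⟨T', hT'2, hT'min⟩ := SS2.exists_min_image (fun X => (X \ (T ∪ D)).card)
    ⟨T₀, Finset.mem_filter.2 ⟨hT₀, rfl⟩⟩
  have hT'sum : ∑ e ∈ T', w' e = m := (Finset.mem_filter.1 hT'2).2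
  have hT'span : IsSpanningTree E T' := (Finset.mem_filter.1 (Finset.mem_filter.1 hT'2).1).2
  obtain ⟨hT'E, hT'tree⟩ := hT'span
  obtain ⟨hT'conn, hT'ac⟩ := (SimpleGraph.isTree_iff _).mp hT'tree
  have hsubset : T' ⊆ T ∪ D := by
    intro e he'
    by_contra heTD
    have heE : e ∈ E := hT'E he'
    have heT : e ∉ T := fun h => heTD (Finset.mem_union_left _ h)
    have heD : e ∉ D := fun h => heTD (Finset.mem_union_right _ h)
    have hwe : w' e = w e := heq e heE heD
    have hkey : ∃ X, X ∈ SS2 ∧ (X \ (T ∪ D)).card < (T' \ (T ∪ D)).card := by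
      by_cases hdiag : e.IsDiag
      · -- loop case
        have hspan1 : IsSpanningTree E (T'.erase e) :=
          ⟨(Finset.erase_subset _ _).trans hT'E,
            by rw [MSTAux.erase_diag hdiag]; exact hT'tree⟩
        have hsum1 : ∑ x ∈ T'.erase e, w' x = m - w' e := by
          rw [Finset.sum_erase_eq_sub he', hT'sum]
        have h1 : m ≤ m - w' e := hsum1 ▸ hmin_sum _ hspan1
        have hspan2 : IsSpanningTree E (insert e T) :=
          ⟨Finset.insert_subset heE hTE,
            by rw [MSTAux.insert_diag hdiag]; exact hTtree⟩
        have h2 := hTmin _ hspan2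
        rw [Finset.sum_insert heT] at h2
        have hwe0 : w' e = 0 := by rw [hwe] at h1 ⊢; linarith
        refine ⟨T'.erase e, Finset.mem_filter.2 ⟨Finset.mem_filter.2
          ⟨Finset.mem_powerset.2 hspan1.1, hspan1⟩, by rw [hsum1, hwe0]; ring⟩, ?_⟩
        have hdiff : (T'.erase e) \ (T ∪ D) = (T' \ (T ∪ D)).erase e := by
          ext x
          simp only [Finset.mem_erase, Finset.mem_sdiff]
          tauto
        rw [hdiff]
        exact Finset.card_erase_lt_of_mem (Finset.mem_sdiff.2 ⟨he', heTD⟩)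
      · -- non-loop case: exchange argument
        obtain ⟨u, v, rfl⟩ : ∃ u v, e = s(u, v) :=
          Sym2.ind (f := fun z => ∃ u v, z = s(u, v)) (fun u v => ⟨u, v, rfl⟩) e
        have hne : u ≠ v := fun h => hdiag (Sym2.mk_isDiag_iff.mpr h)
        have hKnr : ¬ (fromEdgeSet (↑(T'.erase s(u, v)) : Set (Sym2 V))).Reachable u v :=
          MSTAux.not_reach_erase hT'ac he' hne
        obtain ⟨p0⟩ := hTconn.preconnected u v
        obtain ⟨a, b, hKa, hKb, hmem, hMua, hMbv⟩ :=
          MSTAux.cross (fun x =>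
            (fromEdgeSet (↑(T'.erase s(u, v)) : Set (Sym2 V))).Reachable u x)
            p0.bypass p0.bypass_isPath (SimpleGraph.Reachable.refl u) hKnr
        have hfES := p0.bypass.edges_subset_edgeSet hmem
        rw [SimpleGraph.edgeSet_fromEdgeSet] at hfES
        have hfT : s(a, b) ∈ T := by exact_mod_cast hfES.1
        have hab : a ≠ b := fun h => hfES.2 (Sym2.mk_isDiag_iff.mpr h)
        have hfT'e : s(a, b) ∉ T'.erase s(u, v) := fun h =>
          hKb (hKa.trans (MSTAux.gg_adj.2 ⟨h, hab⟩).reachable)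
        have hKab : ¬ (fromEdgeSet (↑(T'.erase s(u, v)) : Set (Sym2 V))).Reachable a b :=
          fun h => hKb (hKa.trans h)
        -- the swapped tree T'' = insert s(a,b) (T'.erase s(u,v))
        have hac'' := MSTAux.add_acyclic
          (MSTAux.acyclic_anti (MSTAux.gg_mono (Finset.erase_subset _ _)) hT'ac) hKab
        have hleK : fromEdgeSet (↑(T'.erase s(u, v)) : Set (Sym2 V)) ≤
            fromEdgeSet (↑(insert s(a, b) (T'.erase s(u, v))) : Set (Sym2 V)) :=
          MSTAux.gg_mono (Finset.subset_insert _ _)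
        have hadjab : (fromEdgeSet (↑(insert s(a, b) (T'.erase s(u, v))) :
            Set (Sym2 V))).Adj a b :=
          MSTAux.gg_adj.2 ⟨Finset.mem_insert_self _ _, hab⟩
        have htwoK : ∀ x, (fromEdgeSet (↑(T'.erase s(u, v)) : Set (Sym2 V))).Reachable x u ∨
            (fromEdgeSet (↑(T'.erase s(u, v)) : Set (Sym2 V))).Reachable x v := fun x =>
          (hT'conn.preconnected x u).elim fun q => MSTAux.twocomp q
        have hKbv : (fromEdgeSet (↑(T'.erase s(u, v)) : Set (Sym2 V))).Reachable b v :=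
          (htwoK b).resolve_left (fun h => hKb h.symm)
        have huv'' : (fromEdgeSet (↑(insert s(a, b) (T'.erase s(u, v))) :
            Set (Sym2 V))).Reachable u v :=
          (SimpleGraph.Reachable.mono hleK hKa).trans
            (hadjab.reachable.trans (SimpleGraph.Reachable.mono hleK hKbv))
        have hreachu : ∀ x, (fromEdgeSet (↑(insert s(a, b) (T'.erase s(u, v))) :
            Set (Sym2 V))).Reachable x u := by
          intro x
          rcases htwoK x with h | h
          · exact SimpleGraph.Reachable.mono hleK h
          · exact (SimpleGraph.Reachable.mono hleK h).trans huv''.symm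
        have hconn'' : (fromEdgeSet (↑(insert s(a, b) (T'.erase s(u, v))) :
            Set (Sym2 V))).Connected := by
          rw [SimpleGraph.connected_iff]
          exact ⟨fun x y => (hreachu x).trans (hreachu y).symm, hT'conn.nonempty⟩
        have hspan'' : IsSpanningTree E (insert s(a, b) (T'.erase s(u, v))) :=
          ⟨Finset.insert_subset (hTE hfT) ((Finset.erase_subset _ _).trans hT'E),
            (SimpleGraph.isTree_iff _).mpr ⟨hconn'', hac''⟩⟩
        -- the swapped tree T''' = insert s(u,v) (T.erase s(a,b))
        have hMab : ¬ (fromEdgeSet (↑(T.erase s(a, b)) : Set (Sym2 V))).Reachable a b :=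
          MSTAux.not_reach_erase hTac hfT hab
        have hMnr : ¬ (fromEdgeSet (↑(T.erase s(a, b)) : Set (Sym2 V))).Reachable u v :=
          fun h => hMab ((hMua.symm.trans h).trans hMbv.symm)
        have hac''' := MSTAux.add_acyclic
          (MSTAux.acyclic_anti (MSTAux.gg_mono (Finset.erase_subset _ _)) hTac) hMnr
        have hleM : fromEdgeSet (↑(T.erase s(a, b)) : Set (Sym2 V)) ≤
            fromEdgeSet (↑(insert s(u, v) (T.erase s(a, b))) : Set (Sym2 V)) :=
          MSTAux.gg_mono (Finset.subset_insert _ _)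
        have hadjuv : (fromEdgeSet (↑(insert s(u, v) (T.erase s(a, b))) :
            Set (Sym2 V))).Adj u v :=
          MSTAux.gg_adj.2 ⟨Finset.mem_insert_self _ _, hne⟩
        have htwoM : ∀ x, (fromEdgeSet (↑(T.erase s(a, b)) : Set (Sym2 V))).Reachable x a ∨
            (fromEdgeSet (↑(T.erase s(a, b)) : Set (Sym2 V))).Reachable x b := fun x =>
          (hTconn.preconnected x a).elim fun q => MSTAux.twocomp q
        have hreacha : ∀ x, (fromEdgeSet (↑(insert s(u, v) (T.erase s(a, b))) :
            Set (Sym2 V))).Reachable x a := by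
          intro x
          rcases htwoM x with h | h
          · exact SimpleGraph.Reachable.mono hleM h
          · exact (SimpleGraph.Reachable.mono hleM h).trans
              ((SimpleGraph.Reachable.mono hleM hMbv).trans
                (hadjuv.symm.reachable.trans (SimpleGraph.Reachable.mono hleM hMua)))
        have hconn''' : (fromEdgeSet (↑(insert s(u, v) (T.erase s(a, b))) :
            Set (Sym2 V))).Connected := by
          rw [SimpleGraph.connected_iff]
          exact ⟨fun x y => (hreacha x).trans (hreacha y).symm, hTconn.nonempty⟩
        have hspan''' : IsSpanningTree E (insert s(u, v) (T.erase s(a, b))) :=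
          ⟨Finset.insert_subset heE ((Finset.erase_subset _ _).trans hTE),
            (SimpleGraph.isTree_iff _).mpr ⟨hconn''', hac'''⟩⟩
        -- weight comparisons
        have hsvTe : s(u, v) ∉ T.erase s(a, b) := fun h => heT (Finset.mem_of_mem_erase h)
        have h3 := hTmin _ hspan'''
        rw [Finset.sum_insert hsvTe, Finset.sum_erase_eq_sub hfT] at h3
        have h2 := hmin_sum _ hspan''
        rw [Finset.sum_insert hfT'e, Finset.sum_erase_eq_sub he', hT'sum] at h2
        have h4 : w' s(a, b) ≤ w s(a, b) := hle _ (hTE hfT)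
        have heqw : w' s(a, b) = w' s(u, v) := by linarith
        have hsum2 : ∑ x ∈ insert s(a, b) (T'.erase s(u, v)), w' x = m := by
          rw [Finset.sum_insert hfT'e, Finset.sum_erase_eq_sub he', hT'sum, heqw]
          ring
        refine ⟨insert s(a, b) (T'.erase s(u, v)), Finset.mem_filter.2
          ⟨Finset.mem_filter.2 ⟨Finset.mem_powerset.2 hspan''.1, hspan''⟩, hsum2⟩, ?_⟩
        have hsub2 : (insert s(a, b) (T'.erase s(u, v))) \ (T ∪ D) ⊆
            (T' \ (T ∪ D)).erase s(u, v) := by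
          intro x hx
          rw [Finset.mem_sdiff] at hx
          rcases Finset.mem_insert.mp hx.1 with rfl | hxe
          · exact absurd (Finset.mem_union_left _ hfT) hx.2
          · exact Finset.mem_erase.2 ⟨(Finset.mem_erase.1 hxe).1,
              Finset.mem_sdiff.2 ⟨(Finset.mem_erase.1 hxe).2, hx.2⟩⟩
        exact lt_of_le_of_lt (Finset.card_le_card hsub2)
          (Finset.card_erase_lt_of_mem (Finset.mem_sdiff.2 ⟨he', heTD⟩))
    obtain ⟨X, hX, hXlt⟩ := hkey
    exact absurd (hT'min X hX) (not_le.mpr hXlt)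
  exact ⟨T', ⟨⟨hT'E, hT'tree⟩, fun X hX => by rw [hT'sum]; exact hmin_sum X hX⟩, hsubset⟩
end

section
/- Contraction rule for MST under edge-weight increases: let G = (V, E, w) be a connected weighted graph with minimum spanning tree T, and let w' agree with w except w'(e) ≥ w(e) on a subset I ⊆ E. Then the forest F = T \ I is contained in some minimum spanning tree T' of (V, E, w'). -/
open scoped Classical

open SimpleGraph

section Aux

variable {V : Type*}

/-- Removing a diagonal (loop) edge from the edge finset does not change the graph. -/
lemma fromEdgeSet_erase_diag (A : Finset (Sym2 V)) (e : Sym2 V) (he : e.IsDiag) :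
    fromEdgeSet (↑(A.erase e) : Set (Sym2 V)) = fromEdgeSet (↑A : Set (Sym2 V)) := by
  ext x y
  simp only [fromEdgeSet_adj, Finset.coe_erase, Set.mem_diff, Finset.mem_coe,
    Set.mem_singleton_iff]
  constructor
  · rintro ⟨⟨h1, _⟩, h2⟩; exact ⟨h1, h2⟩
  · rintro ⟨h1, h2⟩
    refine ⟨⟨h1, fun hh => ?_⟩, h2⟩
    rw [← hh] at he
    exact h2 (Sym2.mk_isDiag_iff.mp he)

/-- Inserting a diagonal (loop) edge into the edge finset does not change the graph. -/
lemma fromEdgeSet_insert_diag (A : Finset (Sym2 V)) (e : Sym2 V) (he : e.IsDiag) :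
    fromEdgeSet (↑(insert e A) : Set (Sym2 V)) = fromEdgeSet (↑A : Set (Sym2 V)) := by
  ext x y
  simp only [fromEdgeSet_adj, Finset.coe_insert, Set.mem_insert_iff, Finset.mem_coe]
  constructor
  · rintro ⟨h1 | h1, h2⟩
    · exact absurd (Sym2.mk_isDiag_iff.mp (h1.symm ▸ he)) h2
    · exact ⟨h1, h2⟩
  · rintro ⟨h1, h2⟩; exact ⟨Or.inr h1, h2⟩

/-- In a connected graph on edge set `A`, after removing the edge `s(u,v)` every
vertex can still reach `u` or `v`. -/
lemma reach_endpoint (A : Finset (Sym2 V)) (u v : V)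
    (hconn : (fromEdgeSet (↑A : Set (Sym2 V))).Connected) (x : V) :
    (fromEdgeSet (↑(A.erase s(u, v)) : Set (Sym2 V))).Reachable x u ∨
      (fromEdgeSet (↑(A.erase s(u, v)) : Set (Sym2 V))).Reachable x v := by
  suffices h : ∀ (y z : V) (_ : (fromEdgeSet (↑A : Set (Sym2 V))).Walk y z),
      ((fromEdgeSet (↑(A.erase s(u, v)) : Set (Sym2 V))).Reachable z u ∨
        (fromEdgeSet (↑(A.erase s(u, v)) : Set (Sym2 V))).Reachable z v) →
      ((fromEdgeSet (↑(A.erase s(u, v)) : Set (Sym2 V))).Reachable y u ∨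
        (fromEdgeSet (↑(A.erase s(u, v)) : Set (Sym2 V))).Reachable y v) by
    obtain ⟨p⟩ := hconn x u
    exact h x u p (Or.inl (Reachable.refl _))
  intro y z p
  induction p with
  | nil => exact id
  | @cons a c _ hadj q ih =>
    intro hz
    rcases eq_or_ne s(a, c) s(u, v) with hec | hec
    · rw [Sym2.eq_iff] at hec
      rcases hec with ⟨rfl, rfl⟩ | ⟨rfl, rfl⟩
      · exact Or.inl (Reachable.refl _)
      · exact Or.inr (Reachable.refl _)
    · have hH : (fromEdgeSet (↑(A.erase s(u, v)) : Set (Sym2 V))).Adj a c := by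
        rw [fromEdgeSet_adj] at hadj ⊢
        exact ⟨by simpa [Finset.mem_erase, hec] using hadj.1, hadj.2⟩
      rcases ih hz with h | h
      · exact Or.inl (hH.reachable.trans h)
      · exact Or.inr (hH.reachable.trans h)

/-- In a tree, removing the edge `s(u,v)` separates `u` from `v`. -/
lemma tree_sep (A : Finset (Sym2 V)) (hA : (fromEdgeSet (↑A : Set (Sym2 V))).IsTree)
    {u v : V} (huv : u ≠ v) (he : s(u, v) ∈ A) :
    ¬ (fromEdgeSet (↑(A.erase s(u, v)) : Set (Sym2 V))).Reachable u v := by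
  have hadj : (fromEdgeSet (↑A : Set (Sym2 V))).Adj u v :=
    (fromEdgeSet_adj _).mpr ⟨by exact_mod_cast he, huv⟩
  have hbr := (isAcyclic_iff_forall_adj_isBridge.mp hA.2) hadj
  rw [isBridge_iff] at hbr
  intro hr
  apply hbr
  refine hr.mono ?_
  intro x y hxy
  rw [fromEdgeSet_adj] at hxy
  simp only [Finset.coe_erase, Set.mem_diff, Finset.mem_coe, Set.mem_singleton_iff] at hxy
  rw [deleteEdges_adj]
  exact ⟨(fromEdgeSet_adj _).mpr ⟨hxy.1.1, hxy.2⟩, fun hc => hxy.1.2 hc⟩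

/-- Swap lemma: if `A` is (the edge finset of) a tree, `s(u,v) ∈ A`, and `a`, `b`
are respectively reachable from `u`, `v` after deleting `s(u,v)`, then replacing
`s(u,v)` by `s(a,b)` again yields a tree.  Moreover `s(a,b) ∉ A.erase s(u,v)`
and `a ≠ b`. -/
lemma tree_swap (A : Finset (Sym2 V)) (hA : (fromEdgeSet (↑A : Set (Sym2 V))).IsTree)
    {u v a b : V} (huv : u ≠ v) (he : s(u, v) ∈ A)
    (hra : (fromEdgeSet (↑(A.erase s(u, v)) : Set (Sym2 V))).Reachable a u)
    (hrb : (fromEdgeSet (↑(A.erase s(u, v)) : Set (Sym2 V))).Reachable b v) :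
    (fromEdgeSet (↑(insert s(a, b) (A.erase s(u, v))) : Set (Sym2 V))).IsTree ∧
      s(a, b) ∉ A.erase s(u, v) ∧ a ≠ b := by
  set H := fromEdgeSet (↑(A.erase s(u, v)) : Set (Sym2 V)) with hHdef
  have hsep : ¬ H.Reachable u v := tree_sep A hA huv he
  have hab : a ≠ b := by
    rintro rfl
    exact hsep (hra.symm.trans hrb)
  have hnotmem : s(a, b) ∉ A.erase s(u, v) := by
    intro hmem
    have : H.Adj a b := (fromEdgeSet_adj _).mpr ⟨by exact_mod_cast hmem, hab⟩
    exact hsep (hra.symm.trans (this.reachable.trans hrb))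
  set B := insert s(a, b) (A.erase s(u, v)) with hBdef
  set GB := fromEdgeSet (↑B : Set (Sym2 V)) with hGBdef
  have hHB : H ≤ GB := by
    apply fromEdgeSet_mono
    intro g hg
    rw [Finset.mem_coe] at hg
    simp only [hBdef, Finset.coe_insert, Set.mem_insert_iff, Finset.mem_coe]
    exact Or.inr hg
  have hadjab : GB.Adj a b := by
    rw [fromEdgeSet_adj]
    exact ⟨by simp [hBdef], hab⟩
  have hreachu : ∀ x : V, GB.Reachable x u := by
    intro x
    rcases reach_endpoint A u v hA.1 x with h | h
    · exact h.mono hHB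
    · exact ((h.mono hHB).trans ((hrb.symm.mono hHB).trans
        (hadjab.symm.reachable.trans (hra.mono hHB))))
  have hGBconn : GB.Connected := by
    rw [connected_iff]
    exact ⟨fun x y => (hreachu x).trans (hreachu y).symm, ⟨u⟩⟩
  refine ⟨⟨hGBconn, ?_⟩, hnotmem, hab⟩
  -- acyclicity
  intro x c hc
  by_cases hf : s(a, b) ∈ c.edges
  · have := adj_and_reachable_delete_edges_iff_exists_cycle.mpr ⟨x, c, hc, hf⟩
    have hle : (GB \ fromEdgeSet {s(a, b)}) ≤ H := by
      intro p q hpq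
      rw [sdiff_adj, fromEdgeSet_adj, fromEdgeSet_adj] at hpq
      obtain ⟨⟨h1, h2⟩, h3⟩ := hpq
      have hne : s(p, q) ≠ s(a, b) := fun hh => h3 ⟨by simp [hh], h2⟩
      rw [hHdef, fromEdgeSet_adj]
      simp only [hBdef, Finset.coe_insert, Set.mem_insert_iff, Finset.mem_coe] at h1
      rcases h1 with h1 | h1
      · exact absurd h1 hne
      · exact ⟨by exact_mod_cast h1, h2⟩
    have hreach : H.Reachable a b := this.2.mono hle
    exact hsep (hra.symm.trans (hreach.trans hrb))
  · -- a cycle avoiding s(a,b) lives in the original tree, contradiction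
    have hsub : ∀ g ∈ c.edges, g ∈ (fromEdgeSet (↑A : Set (Sym2 V))).edgeSet := by
      intro g hg
      have hg' := c.edges_subset_edgeSet hg
      rw [edgeSet_fromEdgeSet] at hg' ⊢
      refine ⟨?_, hg'.2⟩
      have := hg'.1
      simp only [hBdef, Finset.coe_insert, Set.mem_insert_iff, Finset.mem_coe] at this
      rcases this with h | h
      · subst h; exact absurd hg hf
      · exact Finset.mem_coe.mpr (Finset.mem_of_mem_erase h)
    exact hA.2 (c.transfer _ hsub) (hc.transfer hsub)

/-- Splitting a duplicate-free walk at the frontier of a predicate `P`. -/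
lemma walk_split {G2 : SimpleGraph V} {P : V → Prop} :
    ∀ {x y : V} (p : G2.Walk x y), P x → ¬ P y → p.edges.Nodup →
      ∃ (a b : V) (q1 : G2.Walk x a) (q2 : G2.Walk b y),
        P a ∧ ¬ P b ∧ s(a, b) ∈ p.edges ∧ s(a, b) ∉ q1.edges ∧ s(a, b) ∉ q2.edges := by
  intro x y p
  induction p with
  | nil => intro hx hy _; exact absurd hx hy
  | @cons x c y hadj q ih =>
    intro hx hy hnd
    rw [SimpleGraph.Walk.edges_cons, List.nodup_cons] at hnd
    by_cases hPc : P c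
    · obtain ⟨a, b, q1, q2, h1, h2, h3, h4, h5⟩ := ih hPc hy hnd.2
      refine ⟨a, b, SimpleGraph.Walk.cons hadj q1, q2, h1, h2, ?_, ?_, h5⟩
      · simp [SimpleGraph.Walk.edges_cons, h3]
      · simp only [SimpleGraph.Walk.edges_cons, List.mem_cons]
        rintro (hh | hh)
        · exact hnd.1 (hh ▸ h3)
        · exact h4 hh
    · exact ⟨x, c, SimpleGraph.Walk.nil, q, hx, hPc, by simp, by simp, hnd.1⟩

end Aux

/-- Contraction rule for MST under edge-weight increases: if `T` is an MST of
`(V, E, w)` and `w'` agrees with `w` except `w' ≥ w` on a subset `I ⊆ E`, then the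
forest `F = T \ I` is contained in some minimum spanning tree of `(V, E, w')`. -/
theorem mst_contraction_rule {V : Type*} [Fintype V]
    (w w' : Sym2 V → ℝ) (E T I : Finset (Sym2 V)) (hI : I ⊆ E)
    (hT : IsMST w E T)
    (hge : ∀ e ∈ E, w e ≤ w' e)
    (heq : ∀ e ∈ E, e ∉ I → w' e = w e) :
    ∃ T', IsMST w' E T' ∧ T \ I ⊆ T' := by
  classical
  have hTE : T ⊆ E := hT.1.1
  set F : Finset (Sym2 V) := T \ I with hFdef
  have hFT : F ⊆ T := Finset.sdiff_subset
  -- the finset of spanning trees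
  set ST : Finset (Finset (Sym2 V)) :=
    E.powerset.filter (fun A => IsSpanningTree E A) with hSTdef
  have hSTmem : ∀ A, A ∈ ST ↔ IsSpanningTree E A := by
    intro A
    simp only [hSTdef, Finset.mem_filter, Finset.mem_powerset, and_iff_right_iff_imp]
    exact fun h => h.1
  obtain ⟨M, hM, hMmin⟩ := ST.exists_min_image (fun A => ∑ e ∈ A, w' e)
    ⟨T, (hSTmem T).mpr hT.1⟩
  have hMmst : IsMST w' E M :=
    ⟨(hSTmem M).mp hM, fun S hS => hMmin S ((hSTmem S).mpr hS)⟩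
  set MSTs : Finset (Finset (Sym2 V)) := ST.filter (fun A => IsMST w' E A) with hMSTdef
  obtain ⟨T', hT'mem, hT'min⟩ := MSTs.exists_min_image (fun A => (F \ A).card)
    ⟨M, by simp [hMSTdef, Finset.mem_filter, hM, hMmst]⟩
  have hT'mst : IsMST w' E T' := (Finset.mem_filter.mp hT'mem).2
  refine ⟨T', hT'mst, ?_⟩
  intro e heF
  by_contra heT'
  -- we will construct a better MST, contradicting minimality of `T'`
  have heT : e ∈ T := hFT heF
  have heI : e ∉ I := (Finset.mem_sdiff.mp heF).2
  have heE : e ∈ E := hTE heT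
  have hkey : ∃ B, IsMST w' E B ∧ F \ B ⊆ (F \ T').erase e := by
    induction e using Sym2.ind with
    | _ u v =>
    rcases eq_or_ne u v with rfl | huv
    · -- loop edge case
      have hdiag : (s(u, u) : Sym2 V).IsDiag := Sym2.mk_isDiag_iff.mpr rfl
      have hTe : IsSpanningTree E (T.erase s(u, u)) := by
        refine ⟨(Finset.erase_subset _ _).trans hTE, ?_⟩
        rw [fromEdgeSet_erase_diag _ _ hdiag]
        exact hT.1.2
      have hsum := hT.2 (T.erase s(u, u)) hTe
      have hsum2 : ∑ x ∈ T.erase s(u, u), w x + w s(u, u) = ∑ x ∈ T, w x :=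
        Finset.sum_erase_add _ _ heT
      have hwle : w s(u, u) ≤ 0 := by linarith
      set B := insert s(u, u) T' with hBdef
      have hBtree : IsSpanningTree E B := by
        refine ⟨Finset.insert_subset heE hT'mst.1.1, ?_⟩
        rw [fromEdgeSet_insert_diag _ _ hdiag]
        exact hT'mst.1.2
      have hsumB : ∑ x ∈ B, w' x = w' s(u, u) + ∑ x ∈ T', w' x :=
        Finset.sum_insert heT'
      have hw'le : w' s(u, u) ≤ 0 := by rw [heq _ heE heI]; exact hwle
      refine ⟨B, ⟨hBtree, fun S hS => ?_⟩, ?_⟩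
      · calc ∑ x ∈ B, w' x ≤ ∑ x ∈ T', w' x := by rw [hsumB]; linarith
          _ ≤ ∑ x ∈ S, w' x := hT'mst.2 S hS
      · intro g hg
        rw [Finset.mem_sdiff] at hg
        rw [Finset.mem_erase, Finset.mem_sdiff]
        have hgne : g ≠ s(u, u) := fun hh => hg.2 (hh ▸ Finset.mem_insert_self _ _)
        exact ⟨hgne, hg.1, fun hh => hg.2 (Finset.mem_insert_of_mem hh)⟩
    · -- proper edge case: exchange argument
      set H := fromEdgeSet (↑(T.erase s(u, v)) : Set (Sym2 V)) with hHdef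
      have hsep : ¬ H.Reachable u v := tree_sep T hT.1.2 huv heT
      set G2 := fromEdgeSet (↑T' : Set (Sym2 V)) with hG2def
      have hG2tree : G2.IsTree := hT'mst.1.2
      obtain ⟨p0⟩ := hG2tree.isConnected u v
      set p : G2.Walk u v := (p0.toPath : G2.Walk u v) with hpdef
      have hnd : p.edges.Nodup := p0.toPath.2.isTrail.edges_nodup
      have hPu : H.Reachable u u := Reachable.refl _
      have hPv : ¬ H.Reachable v u := fun h => hsep h.symm
      obtain ⟨a, b, q1, q2, hPa, hPb, hfp, hfq1, hfq2⟩ :=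
        walk_split (P := fun x => H.Reachable x u) p hPu hPv hnd
      have hadjab : G2.Adj a b := p.adj_of_mem_edges hfp
      have hab : a ≠ b := hadjab.ne
      have hfT' : s(a, b) ∈ T' := by
        have := (fromEdgeSet_adj _).mp hadjab
        exact_mod_cast this.1
      have hfE : s(a, b) ∈ E := hT'mst.1.1 hfT'
      have hfe : s(a, b) ≠ s(u, v) := by
        intro hh
        exact heT' (hh ▸ hfT')
      have hrb : H.Reachable b v := by
        rcases reach_endpoint T u v hT.1.2.isConnected b with h | h
        · exact absurd h hPb
        · exact h
      have hfnotT : s(a, b) ∉ T := by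
        intro hmem
        have : H.Adj a b := (fromEdgeSet_adj _).mpr
          ⟨by exact_mod_cast Finset.mem_erase.mpr ⟨hfe, hmem⟩, hab⟩
        exact hPb (this.symm.reachable.trans hPa)
      -- first swap: B₁ = insert s(a,b) (T.erase s(u,v)) is a spanning tree, so w e ≤ w f
      obtain ⟨hB1tree, hfnotTe, -⟩ := tree_swap T hT.1.2 huv heT hPa hrb
      have hB1span : IsSpanningTree E (insert s(a, b) (T.erase s(u, v))) :=
        ⟨Finset.insert_subset hfE ((Finset.erase_subset _ _).trans hTE), hB1tree⟩
      have hsum1 := hT.2 _ hB1span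
      rw [Finset.sum_insert hfnotTe] at hsum1
      have hsum1' : ∑ x ∈ T.erase s(u, v), w x + w s(u, v) = ∑ x ∈ T, w x :=
        Finset.sum_erase_add _ _ heT
      have hwef : w s(u, v) ≤ w s(a, b) := by linarith
      -- second swap: B₂ = insert s(u,v) (T'.erase s(a,b)) is a spanning tree
      set H' := fromEdgeSet (↑(T'.erase s(a, b)) : Set (Sym2 V)) with hH'def
      have htrans : ∀ {x y : V} (q : G2.Walk x y), s(a, b) ∉ q.edges →
          H'.Reachable x y := by
        intro x y q hq
        refine ⟨q.transfer H' ?_⟩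
        intro g hg
        have hg' := q.edges_subset_edgeSet hg
        rw [edgeSet_fromEdgeSet] at hg' ⊢
        refine ⟨?_, hg'.2⟩
        have hgT' : g ∈ T' := by exact_mod_cast hg'.1
        have hgne : g ≠ s(a, b) := fun hh => hq (hh ▸ hg)
        exact_mod_cast Finset.mem_erase.mpr ⟨hgne, hgT'⟩
      have hrua : H'.Reachable u a := htrans q1 hfq1
      have hrvb : H'.Reachable v b := (htrans q2 hfq2).symm
      obtain ⟨hB2tree, henotT'f, -⟩ := tree_swap T' hG2tree hab hfT' hrua hrvb
      set B : Finset (Sym2 V) := insert s(u, v) (T'.erase s(a, b)) with hBdef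
      have hB2span : IsSpanningTree E B :=
        ⟨Finset.insert_subset heE ((Finset.erase_subset _ _).trans hT'mst.1.1), hB2tree⟩
      -- weight comparison
      have hsumB : ∑ x ∈ B, w' x = w' s(u, v) + ∑ x ∈ T'.erase s(a, b), w' x :=
        Finset.sum_insert henotT'f
      have hsumT' : ∑ x ∈ T'.erase s(a, b), w' x + w' s(a, b) = ∑ x ∈ T', w' x :=
        Finset.sum_erase_add _ _ hfT'
      have hw'e : w' s(u, v) = w s(u, v) := heq _ heE heI
      have hw'f : w s(a, b) ≤ w' s(a, b) := hge _ hfE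
      have hBle : ∑ x ∈ B, w' x ≤ ∑ x ∈ T', w' x := by
        rw [hsumB, hw'e]; linarith
      refine ⟨B, ⟨hB2span, fun S hS => hBle.trans (hT'mst.2 S hS)⟩, ?_⟩
      intro g hg
      rw [Finset.mem_sdiff] at hg
      rw [Finset.mem_erase, Finset.mem_sdiff]
      have hgne : g ≠ s(u, v) := fun hh => hg.2 (hh ▸ Finset.mem_insert_self _ _)
      refine ⟨hgne, hg.1, fun hgT' => ?_⟩
      have hgf : g ≠ s(a, b) := by
        rintro rfl
        exact hfnotT (hFT hg.1)
      exact hg.2 (Finset.mem_insert_of_mem (Finset.mem_erase.mpr ⟨hgf, hgT'⟩))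
  obtain ⟨B, hBmst, hBsub⟩ := hkey
  have hBmem : B ∈ MSTs := Finset.mem_filter.mpr ⟨(hSTmem B).mpr hBmst.1, hBmst⟩
  have hcard := hT'min B hBmem
  have heFT' : e ∈ F \ T' := Finset.mem_sdiff.mpr ⟨heF, heT'⟩
  have hlt : ((F \ T').erase e).card < (F \ T').card :=
    Finset.card_erase_lt_of_mem heFT'
  have := Finset.card_le_card hBsub
  omega
end

section
/- Single-linkage hierarchy from the MST: let G = (V, E, w) be a finite connected weighted graph with minimum spanning tree T. For any threshold ε, two vertices u, v lie in the same connected component of the subgraph of G consisting of edges of weight ≤ ε if and only if they lie in the same connected component of the subgraph of T consisting of tree edges of weight ≤ ε. -/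
open scoped Classical

private lemma reach_endpoints {V : Type*} (S : Finset (Sym2 V)) (a b : V)
    {z c : V} (q : (SimpleGraph.fromEdgeSet (↑S : Set (Sym2 V))).Walk z c)
    (hc : c = a ∨ c = b) :
    (SimpleGraph.fromEdgeSet (↑(S.erase s(a,b)) : Set (Sym2 V))).Reachable z a ∨
      (SimpleGraph.fromEdgeSet (↑(S.erase s(a,b)) : Set (Sym2 V))).Reachable z b := by
  induction q with
  | nil =>
    rcases hc with rfl | rfl
    · exact Or.inl (SimpleGraph.Reachable.refl _)
    · exact Or.inr (SimpleGraph.Reachable.refl _)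
  | cons h q ih =>
    rename_i u d _
    by_cases he : s(u, d) = s(a, b)
    · rw [Sym2.eq_iff] at he
      rcases he with ⟨rfl, rfl⟩ | ⟨rfl, rfl⟩
      · exact Or.inl (SimpleGraph.Reachable.refl _)
      · exact Or.inr (SimpleGraph.Reachable.refl _)
    · have hmem : s(u, d) ∈ (↑S : Set (Sym2 V)) := ((SimpleGraph.fromEdgeSet_adj _).1 h).1
      have hadj : (SimpleGraph.fromEdgeSet (↑(S.erase s(a,b)) : Set (Sym2 V))).Adj u d :=
        (SimpleGraph.fromEdgeSet_adj _).2
          ⟨Finset.mem_coe.2 (Finset.mem_erase.2 ⟨he, Finset.mem_coe.1 hmem⟩), h.ne⟩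
      rcases ih hc with h1 | h1
      · exact Or.inl (hadj.reachable.trans h1)
      · exact Or.inr (hadj.reachable.trans h1)

/-- Key exchange lemma: any single `E`-edge of weight `≤ ε` has its endpoints
connected in the `ε`-filtered tree. -/
lemma mst_key {V : Type*} [Fintype V]
    (w : Sym2 V → ℝ) (E T : Finset (Sym2 V)) (hT : IsMST w E T)
    (ε : ℝ) (x y : V) (hxE : s(x,y) ∈ E) (hw : w s(x,y) ≤ ε) (hne : x ≠ y) :
    (SimpleGraph.fromEdgeSet (↑(T.filter fun e => w e ≤ ε) : Set (Sym2 V))).Reachable x y := by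
  by_contra hcon
  obtain ⟨⟨hTE, htree⟩, hmin⟩ := hT
  set G_T := SimpleGraph.fromEdgeSet (↑T : Set (Sym2 V)) with hGT
  -- the edge s(x,y) is not in T
  have hxT : s(x,y) ∉ T := by
    intro h
    exact hcon (SimpleGraph.Adj.reachable ((SimpleGraph.fromEdgeSet_adj _).2
      ⟨Finset.mem_coe.2 (Finset.mem_filter.2 ⟨h, hw⟩), hne⟩))
  -- the unique path in the tree from x to y
  obtain ⟨p, hp, hpuniq⟩ := htree.existsUnique_path x y
  -- some edge of p has weight > ε
  have hex : ∃ f ∈ p.edges, ε < w f := by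
    by_contra h
    push_neg at h
    apply hcon
    refine ⟨p.transfer _ ?_⟩
    intro f hf
    have hfe := p.edges_subset_edgeSet hf
    rw [SimpleGraph.edgeSet_fromEdgeSet] at hfe ⊢
    exact ⟨Finset.mem_coe.2 (Finset.mem_filter.2 ⟨Finset.mem_coe.1 hfe.1, h f hf⟩), hfe.2⟩
  obtain ⟨f, hfp, hfw⟩ := hex
  have hfT := p.edges_subset_edgeSet hfp
  rw [SimpleGraph.edgeSet_fromEdgeSet] at hfT
  induction f using Sym2.ind with
  | _ a b =>
  have hfmem : s(a,b) ∈ T := Finset.mem_coe.1 hfT.1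
  have hfne : s(x,y) ≠ s(a,b) := by
    intro h; rw [h] at hw; linarith
  set H := SimpleGraph.fromEdgeSet (↑(T.erase s(a,b)) : Set (Sym2 V)) with hH
  set T' := insert s(x,y) (T.erase s(a,b)) with hT'
  set K := SimpleGraph.fromEdgeSet (↑T' : Set (Sym2 V)) with hK
  have hHle : H ≤ G_T :=
    SimpleGraph.fromEdgeSet_mono (Finset.coe_subset.2 (Finset.erase_subset _ _))
  have hHK : H ≤ K :=
    SimpleGraph.fromEdgeSet_mono (Finset.coe_subset.2 (Finset.subset_insert _ _))
  -- every vertex reaches a or b in H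
  have hcover : ∀ z, H.Reachable z a ∨ H.Reachable z b := by
    intro z
    obtain ⟨q⟩ := htree.isConnected.preconnected z a
    exact reach_endpoints T a b q (Or.inl rfl)
  -- x and y are not reachable in H
  have hab_nr : ¬ H.Reachable x y := by
    rintro ⟨q⟩
    have hq : ∀ g ∈ q.edges, g ∈ G_T.edgeSet := fun g hg =>
      SimpleGraph.edgeSet_mono hHle (q.edges_subset_edgeSet hg)
    have heq : ((q.transfer G_T hq).toPath : G_T.Walk x y) = p :=
      hpuniq _ (q.transfer G_T hq).toPath.2
    have hfp' : s(a,b) ∈ ((q.transfer G_T hq).toPath : G_T.Walk x y).edges := heq ▸ hfp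
    have hfq : s(a,b) ∈ (q.transfer G_T hq).edges :=
      SimpleGraph.Walk.edges_toPath_subset _ hfp'
    rw [SimpleGraph.Walk.edges_transfer] at hfq
    have h2 := q.edges_subset_edgeSet hfq
    rw [SimpleGraph.edgeSet_fromEdgeSet] at h2
    have h3 : s(a,b) ∈ T.erase s(a,b) := Finset.mem_coe.1 h2.1
    simp at h3
  have hxyK : K.Adj x y := (SimpleGraph.fromEdgeSet_adj _).2
    ⟨Finset.mem_coe.2 (Finset.mem_insert_self _ _), hne⟩
  -- a and b are connected in K
  have habK : K.Reachable a b := by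
    rcases hcover x with hx1 | hx1 <;> rcases hcover y with hy1 | hy1
    · exact absurd (hx1.trans hy1.symm) hab_nr
    · exact ((hx1.mono hHK).symm.trans hxyK.reachable).trans (hy1.mono hHK)
    · exact ((hy1.mono hHK).symm.trans hxyK.reachable.symm).trans (hx1.mono hHK)
    · exact absurd (hx1.trans hy1.symm) hab_nr
  have hreachAll : ∀ z, K.Reachable z a := by
    intro z
    rcases hcover z with h1 | h1
    · exact h1.mono hHK
    · exact (h1.mono hHK).trans habK.symm
  have hKconn : K.Connected := by
    rw [SimpleGraph.connected_iff]
    exact ⟨fun c d => (hreachAll c).trans (hreachAll d).symm, htree.isConnected.nonempty⟩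
  have hKacyclic : K.IsAcyclic := by
    intro z c hc
    by_cases hec : s(x,y) ∈ c.edges
    · have hdel : K \ SimpleGraph.fromEdgeSet {s(x,y)} ≤ H := by
        intro c' d' hadj
        rw [SimpleGraph.sdiff_adj, SimpleGraph.fromEdgeSet_adj,
          SimpleGraph.fromEdgeSet_adj] at hadj
        obtain ⟨⟨hmem, hne'⟩, hno⟩ := hadj
        have hneq : s(c', d') ≠ s(x, y) := by
          intro h; exact hno ⟨by simp [h], hne'⟩
        rw [hT'] at hmem
        simp only [Finset.coe_insert, Set.mem_insert_iff] at hmem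
        rcases hmem with h | h
        · exact absurd h hneq
        · exact (SimpleGraph.fromEdgeSet_adj _).2 ⟨h, hne'⟩
      have hbr : K.IsBridge s(x,y) := by
        rw [SimpleGraph.isBridge_iff]
        exact fun hr => hab_nr (hr.mono (by exact hdel))
      exact hbr.notMem_edges_of_isCycle hc hec
    · have hcsub : ∀ g ∈ c.edges, g ∈ G_T.edgeSet := by
        intro g hg
        have hge := c.edges_subset_edgeSet hg
        rw [SimpleGraph.edgeSet_fromEdgeSet] at hge ⊢
        refine ⟨?_, hge.2⟩
        have h1 := hge.1
        rw [hT'] at h1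
        simp only [Finset.coe_insert, Set.mem_insert_iff] at h1
        rcases h1 with h | h
        · exact absurd (h ▸ hg) hec
        · exact Finset.mem_coe.2 ((Finset.erase_subset _ _) (Finset.mem_coe.1 h))
      exact htree.IsAcyclic (c.transfer G_T hcsub) (hc.transfer hcsub)
  have hT'sp : IsSpanningTree E T' :=
    ⟨Finset.insert_subset hxE ((Finset.erase_subset _ _).trans hTE),
      (SimpleGraph.isTree_iff _).2 ⟨hKconn, hKacyclic⟩⟩
  have hle := hmin _ hT'sp
  rw [hT', Finset.sum_insert (fun h => hxT ((Finset.erase_subset _ _) h)),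
    Finset.sum_erase_eq_sub hfmem] at hle
  linarith

/-- Single-linkage hierarchy from the MST: if `T` is a minimum spanning tree of
`(V, E, w)`, then for any threshold `ε` two vertices are connected by edges of `E` of
weight `≤ ε` iff they are connected by edges of `T` of weight `≤ ε`. -/
theorem single_linkage_from_mst {V : Type*} [Fintype V]
    (w : Sym2 V → ℝ) (E T : Finset (Sym2 V)) (hT : IsMST w E T)
    (ε : ℝ) (u v : V) :
    (SimpleGraph.fromEdgeSet (↑(E.filter fun e => w e ≤ ε) : Set (Sym2 V))).Reachable u v ↔
      (SimpleGraph.fromEdgeSet (↑(T.filter fun e => w e ≤ ε) : Set (Sym2 V))).Reachable u v := by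
  constructor
  · rintro ⟨q⟩
    induction q with
    | nil => exact SimpleGraph.Reachable.refl _
    | cons h q ih =>
      obtain ⟨hmem, hne⟩ := (SimpleGraph.fromEdgeSet_adj _).1 h
      rw [Finset.mem_coe, Finset.mem_filter] at hmem
      exact (mst_key w E T hT ε _ _ hmem.1 hmem.2 hne).trans ih
  · intro h
    refine h.mono (SimpleGraph.fromEdgeSet_mono ?_)
    rw [Finset.coe_subset]
    exact Finset.filter_subset_filter _ hT.1.1
end
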